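/- Let (Ω, 𝒜, μ) be a probability space, let Outputs : Ω → O and Labor : Ω → L be measurable random variables with O and L finite (discrete) types, and let Pay = f ∘ Outputs for some function f : O → P into a finite type P (pay is calculated as a function of the measured outputs of work). If Pay is conditionally independent of Outputs given Labor, then Pay is conditionally degenerate given Labor: for every l ∈ L with μ(Labor = l) > 0, there exists p ∈ P with μ(Pay = p | Labor = l) = 1. Consequently, if there is a value l with μ(Labor = l) > 0 on which Pay is not almost-surely constant, then it is impossible for both (i) Pay conditionally independent of Labor given Outputs and (ii) Pay conditionally independent of Outputs given Labor to hold (note (i) holds automatically since Pay is a function of Outputs). -/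

import Mathlib

open MeasureTheory

/-- Discrete conditional independence: for all values `a`, `b`, `c` with `μ(C = c) > 0`,
`μ(A = a, B = b | C = c) = μ(A = a | C = c) * μ(B = b | C = c)`, where conditional
probability given `{C = c}` is `μ(· ∩ {C = c}) / μ {C = c}`. -/
def DiscreteCondIndep {Ω α β γ : Type*} [MeasurableSpace Ω] (μ : Measure Ω)
    (A : Ω → α) (B : Ω → β) (C : Ω → γ) : Prop :=
  ∀ (a : α) (b : β) (c : γ), 0 < μ {ω | C ω = c} →
    μ {ω | A ω = a ∧ B ω = b ∧ C ω = c} / μ {ω | C ω = c} =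
      (μ {ω | A ω = a ∧ C ω = c} / μ {ω | C ω = c}) *
        (μ {ω | B ω = b ∧ C ω = c} / μ {ω | C ω = c})

/-- Fair Pay Impossibility (second claim). Pay is a function of measured outputs,
`Pay = f ∘ Outputs`. If `Pay ⟂ Outputs | Labor`, then `Pay` is conditionally
degenerate given `Labor`; consequently, if `Pay` is not almost-surely constant
conditionally on some value of `Labor` of positive probability, then
`Pay ⟂ Labor | Outputs` and `Pay ⟂ Outputs | Labor` cannot both hold. -/
theorem fair_pay_impossibility_outputs
    {Ω O L P : Type*} [MeasurableSpace Ω]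
    [MeasurableSpace O] [MeasurableSpace L]
    [Fintype O] [Fintype L] [Fintype P]
    [MeasurableSingletonClass O] [MeasurableSingletonClass L]
    (μ : Measure Ω) [IsProbabilityMeasure μ]
    (Outputs : Ω → O) (Labor : Ω → L)
    (hO : Measurable Outputs) (hL : Measurable Labor)
    (f : O → P) (Pay : Ω → P) (hPay : Pay = fun ω => f (Outputs ω)) :
    (DiscreteCondIndep μ Pay Outputs Labor →
      ∀ l : L, 0 < μ {ω | Labor ω = l} →
        ∃ p : P, μ {ω | Pay ω = p ∧ Labor ω = l} / μ {ω | Labor ω = l} = 1) ∧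
    ((∃ l : L, 0 < μ {ω | Labor ω = l} ∧
        ¬ ∃ p : P, μ {ω | Pay ω = p ∧ Labor ω = l} / μ {ω | Labor ω = l} = 1) →
      ¬ (DiscreteCondIndep μ Pay Labor Outputs ∧
          DiscreteCondIndep μ Pay Outputs Labor)) := by
  have main : DiscreteCondIndep μ Pay Outputs Labor →
      ∀ l : L, 0 < μ {ω | Labor ω = l} →
        ∃ p : P, μ {ω | Pay ω = p ∧ Labor ω = l} / μ {ω | Labor ω = l} = 1 := by
    intro hCI l hl
    -- find o with positive joint measure
    have hexists : ∃ o : O, 0 < μ {ω | Outputs ω = o ∧ Labor ω = l} := by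
      by_contra h
      push_neg at h
      have hzero : ∀ o : O, μ {ω | Outputs ω = o ∧ Labor ω = l} = 0 := fun o =>
        le_antisymm (h o) zero_le
      have hsub : {ω | Labor ω = l} ⊆ ⋃ o ∈ Finset.univ, {ω | Outputs ω = o ∧ Labor ω = l} := by
        intro ω hω
        exact Set.mem_biUnion (Finset.mem_univ (Outputs ω)) ⟨rfl, hω⟩
      have := (measure_mono hsub).trans (measure_biUnion_finset_le (μ := μ) Finset.univ _)
      simp [hzero] at this
      exact absurd this hl.ne'
    obtain ⟨o, ho⟩ := hexists
    refine ⟨f o, ?_⟩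
    have hkey := hCI (f o) o l hl
    have hset : {ω | Pay ω = f o ∧ Outputs ω = o ∧ Labor ω = l}
        = {ω | Outputs ω = o ∧ Labor ω = l} := by
      ext ω
      subst hPay
      simp only [Set.mem_setOf_eq]
      constructor
      · rintro ⟨_, h2, h3⟩; exact ⟨h2, h3⟩
      · rintro ⟨h2, h3⟩; exact ⟨by rw [h2], h2, h3⟩
    rw [hset] at hkey
    set c := μ {ω | Labor ω = l} with hc
    set d := μ {ω | Outputs ω = o ∧ Labor ω = l} / c with hd
    set q := μ {ω | Pay ω = f o ∧ Labor ω = l} / c with hq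
    -- hkey : d = q * d
    have hcne : c ≠ 0 := hl.ne'
    have hctop : c ≠ ⊤ := (measure_lt_top μ _).ne
    have hdne : d ≠ 0 := by
      rw [hd]
      exact (ENNReal.div_pos ho.ne' hctop).ne'
    have hdtop : d ≠ ⊤ := by
      rw [hd]
      exact (ENNReal.div_lt_top (measure_lt_top μ _).ne hcne).ne
    calc q = q * d / d := by rw [mul_div_assoc, ENNReal.div_self hdne hdtop, mul_one]
      _ = d / d := by rw [← hkey]
      _ = 1 := ENNReal.div_self hdne hdtop
  refine ⟨main, ?_⟩
  rintro ⟨l, hl, hnot⟩ ⟨_, h2⟩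
  exact hnot (main h2 l hl)
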